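/- Let k ≥ 1 and c ≥ 1 be integers, let δ > 0 and let n ≥ 1. Let G₁ be a graph on a finite vertex set V equipped with a k-multicolouring, i.e. spanning subgraphs G¹, …, Gᵏ of G₁ whose edge sets have union E(G₁). Suppose that: (i) every vertex of G₁ has at most δn non-neighbours in G₁; (ii) for every ℓ ∈ {1,…,k}, the graph Gˡ has at most c connected components (counting isolated vertices as components); and (iii) for every ℓ ∈ {1,…,k}, every connected component of Gˡ induces in Gˡ a complete blow-up of a star. Then the complement of G₁ has no matching with more than (2c)^{2k}·4^k·δn edges. -/

import Mathlib

open SimpleGraph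

variable {V : Type*} {k : ℕ}

/-- The subgraph of `G` spanned by the edges of colour `ℓ`. -/
def colourGraph (G : SimpleGraph V) (χ : Sym2 V → Fin k) (ℓ : Fin k) : SimpleGraph V where
  Adj u v := G.Adj u v ∧ χ s(u, v) = ℓ
  symm := by
    constructor
    intro u v h
    exact ⟨h.1.symm, by rw [Sym2.eq_swap]; exact h.2⟩
  loopless := by
    constructor
    intro u h
    exact G.irrefl h.1

/-- `M` is a matching in `H`: its pairs are edges of `H` and are pairwise vertex-disjoint. -/
def IsMatchingSet (H : SimpleGraph V) (M : Finset (V × V)) : Prop :=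
  (∀ e ∈ M, H.Adj e.1 e.2) ∧
  (∀ e ∈ M, ∀ e' ∈ M, e ≠ e' →
    e.1 ≠ e'.1 ∧ e.1 ≠ e'.2 ∧ e.2 ≠ e'.1 ∧ e.2 ≠ e'.2)

/-- `M` is a connected matching in `H`: a matching contained in one component of `H`. -/
def IsConnMatching (H : SimpleGraph V) (M : Finset (V × V)) : Prop :=
  IsMatchingSet H M ∧ ∀ e ∈ M, ∀ e' ∈ M, H.Reachable e.1 e'.1

/-- A piece of a 2-matching: a list of vertices forming either an edge or an odd cycle of `H`. -/
def IsTwoMatchPiece (H : SimpleGraph V) (l : List V) : Prop :=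
  2 ≤ l.length ∧ (l.length = 2 ∨ Odd l.length) ∧ l.Nodup ∧ l.Chain' H.Adj ∧
    ∀ (h : l ≠ []), H.Adj (l.getLast h) (l.head h)

/-- A 2-matching in `H`: a collection of pairwise vertex-disjoint edges and odd cycles. -/
def IsTwoMatching (H : SimpleGraph V) (P : List (List V)) : Prop :=
  (∀ l ∈ P, IsTwoMatchPiece H l) ∧
    P.Pairwise (fun l₁ l₂ => ∀ v ∈ l₁, v ∉ l₂)

/-- The order of a 2-matching: the number of vertices it covers. -/
def twoMatchOrder (P : List (List V)) : ℕ := (P.map List.length).sum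

/-- A connected 2-matching: a 2-matching contained in one component of `H`. -/
def IsConnTwoMatching (H : SimpleGraph V) (P : List (List V)) : Prop :=
  IsTwoMatching H P ∧ ∀ l ∈ P, ∀ v ∈ l, ∀ l' ∈ P, ∀ v' ∈ l', H.Reachable v v'

/-- The component of `H` containing the matching `M` is non-bipartite (contains an odd cycle). -/
def MatchingInNonBipComponent (H : SimpleGraph V) (M : Finset (V × V)) : Prop :=
  ∃ (w : V) (p : H.Walk w w), p.IsCycle ∧ Odd p.length ∧ ∀ e ∈ M, H.Reachable e.1 w

/-- The component of `H` containing the 2-matching `P` is non-bipartite. -/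
def TwoMatchingInNonBipComponent (H : SimpleGraph V) (P : List (List V)) : Prop :=
  ∃ (w : V) (p : H.Walk w w), p.IsCycle ∧ Odd p.length ∧ ∀ l ∈ P, ∀ v ∈ l, H.Reachable v w

/-- `H` contains a cycle of length `t`. -/
def HasCycleLen (H : SimpleGraph V) (t : ℕ) : Prop :=
  ∃ (w : V) (p : H.Walk w w), p.IsCycle ∧ p.length = t

/-- `H` contains a path on `n` vertices. -/
def HasPathOn (H : SimpleGraph V) (n : ℕ) : Prop :=
  ∃ (u v : V) (p : H.Walk u v), p.IsPath ∧ p.length + 1 = n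

/-- The blow-up `F(m₁, …, m_s)` of a graph `F` on `[s]`, possibly with loops, where vertex `i`
is replaced by `m i` vertices. -/
def blowup {s : ℕ} (F : Fin s → Fin s → Prop) (hF : Symmetric F) (m : Fin s → ℕ) :
    SimpleGraph ((i : Fin s) × Fin (m i)) where
  Adj x y := x ≠ y ∧ F x.1 y.1
  symm := by
    constructor
    intro x y h
    exact ⟨h.1.symm, hF h.2⟩
  loopless := by
    constructor
    intro x h
    exact h.1 rfl

/-- The largest even natural number which is at most `x`. -/
noncomputable def evenFloor (x : ℝ) : ℕ := 2 * ⌊x / 2⌋₊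

/-- The largest odd natural number which is at most `x` (for `x ≥ 1`). -/
noncomputable def oddFloor (x : ℝ) : ℕ := 2 * ⌊(x - 1) / 2⌋₊ + 1

lemma aux_pigeonhole_fiber {α β : Type*} [Fintype β] [DecidableEq β]
    (s : Finset α) (g : α → β) (hs : s.Nonempty) :
    ∃ b : β, s.card ≤ Fintype.card β * (s.filter fun a => g a = b).card := by
  classical
  have hne : (Finset.univ : Finset β).Nonempty := ⟨g hs.choose, Finset.mem_univ _⟩
  obtain ⟨b, -, hb⟩ := Finset.exists_max_image Finset.univ
    (fun b => (s.filter fun a => g a = b).card) hne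
  refine ⟨b, ?_⟩
  calc s.card = ∑ y : β, (s.filter fun a => g a = y).card :=
        Finset.card_eq_sum_card_fiberwise (fun a _ => Finset.mem_univ (g a))
    _ ≤ Finset.univ.card • (s.filter fun a => g a = b).card :=
        Finset.sum_le_card_nsmul _ _ _ (fun y _ => hb y (Finset.mem_univ y))
    _ = _ := by rw [Finset.card_univ, smul_eq_mul]

lemma aux_powerset_count {r : ℕ} {i j : Fin r} (hij : i ≠ j) :
    2 ^ (r - 2) ≤ (((Finset.univ : Finset (Fin r)).powerset.filter
      fun T => i ∈ T ∧ j ∉ T)).card := by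
  classical
  have hsub : (((Finset.univ : Finset (Fin r)).erase i).erase j).card = r - 2 := by
    rw [Finset.card_erase_of_mem (Finset.mem_erase.2 ⟨hij.symm, Finset.mem_univ j⟩),
      Finset.card_erase_of_mem (Finset.mem_univ i), Finset.card_univ, Fintype.card_fin]
    omega
  calc 2 ^ (r - 2)
      = ((((Finset.univ : Finset (Fin r)).erase i).erase j).powerset).card := by
        rw [Finset.card_powerset, hsub]
    _ ≤ _ := by
        refine Finset.card_le_card_of_injOn (fun S => insert i S) ?_ ?_
        · intro S hS
          rw [Finset.mem_coe, Finset.mem_powerset] at hS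
          refine Finset.mem_filter.2 ⟨Finset.mem_powerset.2 (Finset.subset_univ _),
            Finset.mem_insert_self _ _, ?_⟩
          intro hj
          rcases Finset.mem_insert.1 hj with h | h
          · exact hij h.symm
          · exact Finset.notMem_erase j _ (hS h)
        · intro S hS S' hS' hSS'
          simp only [Finset.coe_powerset, Set.mem_preimage, Set.mem_powerset_iff,
            Finset.coe_subset] at hS hS'
          have hiS : i ∉ S := fun h => Finset.notMem_erase i _ (Finset.mem_of_mem_erase (hS h))
          have hiS' : i ∉ S' := fun h => Finset.notMem_erase i _ (Finset.mem_of_mem_erase (hS' h))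
          have := congrArg (fun T => Finset.erase T i) hSS'
          simpa [Finset.erase_insert hiS, Finset.erase_insert hiS'] using this

lemma aux_exists_cut {α : Type*} (s : Finset α) {r : ℕ} (p q : α → Fin r)
    (hpq : ∀ a ∈ s, p a ≠ q a) :
    ∃ T : Finset (Fin r),
      s.card ≤ 4 * (s.filter fun a => p a ∈ T ∧ q a ∉ T).card := by
  classical
  rcases s.eq_empty_or_nonempty with rfl | hs
  · exact ⟨∅, by simp⟩
  obtain ⟨a0, ha0⟩ := hs
  have hr : 2 ≤ r := by
    have h1 := (p a0).isLt
    have h2 := (q a0).isLt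
    have h3 := hpq a0 ha0
    by_contra hcon
    exact h3 (Fin.ext (by omega))
  set P := (Finset.univ : Finset (Fin r)).powerset with hP
  have hsum : s.card * 2 ^ (r - 2) ≤
      ∑ T ∈ P, (s.filter fun a => p a ∈ T ∧ q a ∉ T).card := by
    calc s.card * 2 ^ (r - 2) = ∑ _a ∈ s, 2 ^ (r - 2) := by
          rw [Finset.sum_const, smul_eq_mul]
      _ ≤ ∑ a ∈ s, (P.filter fun T => p a ∈ T ∧ q a ∉ T).card :=
          Finset.sum_le_sum fun a ha => aux_powerset_count (hpq a ha)
      _ = ∑ a ∈ s, ∑ T ∈ P, (if p a ∈ T ∧ q a ∉ T then 1 else 0) := by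
          refine Finset.sum_congr rfl fun a _ => ?_
          rw [Finset.card_filter]
      _ = ∑ T ∈ P, ∑ a ∈ s, (if p a ∈ T ∧ q a ∉ T then 1 else 0) := Finset.sum_comm
      _ = ∑ T ∈ P, (s.filter fun a => p a ∈ T ∧ q a ∉ T).card := by
          refine Finset.sum_congr rfl fun T _ => (Finset.card_filter _ _).symm
  obtain ⟨T, -, hT⟩ := Finset.exists_max_image P
    (fun T => (s.filter fun a => p a ∈ T ∧ q a ∉ T).card) ⟨∅, by simp [hP]⟩
  refine ⟨T, ?_⟩
  have h2 : ∑ T' ∈ P, (s.filter fun a => p a ∈ T' ∧ q a ∉ T').card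
      ≤ P.card * (s.filter fun a => p a ∈ T ∧ q a ∉ T).card := by
    rw [← smul_eq_mul]
    exact Finset.sum_le_card_nsmul _ _ _ fun T' hT' => hT T' hT'
  have hPcard : P.card = 2 ^ r := by
    rw [hP, Finset.card_powerset, Finset.card_univ, Fintype.card_fin]
  have h4 : (2 : ℕ) ^ r = 4 * 2 ^ (r - 2) := by
    obtain ⟨m, rfl⟩ := Nat.exists_eq_add_of_le hr
    rw [Nat.add_sub_cancel_left, pow_add]
    norm_num
  have hfin := le_trans hsum h2
  rw [hPcard, h4] at hfin
  have hpos : 0 < 2 ^ (r - 2) := pow_pos (by norm_num) _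
  have : s.card * 2 ^ (r - 2) ≤ (4 * (s.filter fun a => p a ∈ T ∧ q a ∉ T).card) * 2 ^ (r - 2) := by
    calc s.card * 2 ^ (r - 2) ≤ 4 * 2 ^ (r - 2) * (s.filter fun a => p a ∈ T ∧ q a ∉ T).card := hfin
      _ = _ := by ring
  exact Nat.le_of_mul_le_mul_right this hpos
lemma aux_matchingSet_subset {V : Type*} {H : SimpleGraph V} {M N : Finset (V × V)}
    (hM : IsMatchingSet H M) (hNM : N ⊆ M) : IsMatchingSet H N :=
  ⟨fun e he => hM.1 e (hNM he), fun e he e' he' hne => hM.2 e (hNM he) e' (hNM he') hne⟩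


/-- Claim `claim:matching-complement` (abstract form): if `G₁` is a
`k`-multicoloured graph (colour classes `Gc 0, …, Gc (k-1)` covering `E(G₁)`), every vertex has
at most `δn` non-neighbours, each colour has at most `c` components, and every monochromatic
component induces a complete blow-up of a star, then the complement of `G₁` has no matching
with more than `(2c)^{2k} · 4^k · δ n` edges. -/
theorem stmt_16 {V : Type*} [Fintype V] (k c : ℕ) (hk : 1 ≤ k) (hc : 1 ≤ c)
    (δ : ℝ) (hδ : 0 < δ) (n : ℕ) (hn : 1 ≤ n)
    (G₁ : SimpleGraph V) (Gc : Fin k → SimpleGraph V)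
    (hsub : ∀ ℓ, Gc ℓ ≤ G₁)
    (hcover : ∀ u v : V, G₁.Adj u v → ∃ ℓ, (Gc ℓ).Adj u v)
    (hdeg : ∀ u : V, (({v | v ≠ u ∧ ¬ G₁.Adj u v} : Set V).ncard : ℝ) ≤ δ * n)
    (hcomp : ∀ ℓ : Fin k, Nat.card (Gc ℓ).ConnectedComponent ≤ c)
    (hstar : ∀ (ℓ : Fin k) (C : (Gc ℓ).ConnectedComponent),
      ∃ (A : Set V) (r : ℕ) (B : Fin r → Set V),
        (A ∪ ⋃ i, B i) = C.supp ∧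
        (∀ i, Disjoint A (B i)) ∧
        (∀ i j, i ≠ j → Disjoint (B i) (B j)) ∧
        ∀ u v : V, u ∈ C.supp → v ∈ C.supp → u ≠ v →
          ((Gc ℓ).Adj u v ↔ u ∈ A ∨ v ∈ A ∨ ∃ i, u ∈ B i ∧ v ∈ B i)) :
    ∀ M : Finset (V × V), IsMatchingSet G₁ᶜ M →
      (M.card : ℝ) ≤ (2 * c : ℝ) ^ (2 * k) * 4 ^ k * δ * n := by
  classical
  intro M hM
  have key : ∀ j, j ≤ k → ∃ N : Finset (V × V), IsMatchingSet G₁ᶜ N ∧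
      (∀ ℓ : Fin k, (ℓ : ℕ) < j → ∀ e ∈ N, ∀ e' ∈ N, ¬ (Gc ℓ).Adj e.1 e'.2) ∧
      M.card ≤ (4 * c ^ 2) ^ j * N.card := by
    intro j
    induction j with
    | zero =>
      intro _
      exact ⟨M, hM, fun ℓ hℓ => absurd hℓ (Nat.not_lt_zero _), by simp⟩
    | succ j ih =>
      intro hjk
      obtain ⟨N, hN, hNcol, hNcard⟩ := ih (Nat.le_of_succ_le hjk)
      rcases N.eq_empty_or_nonempty with rfl | hNne
      · refine ⟨∅, ⟨fun e he => absurd he (by simp), fun e he => absurd he (by simp)⟩,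
          fun ℓ hℓ e he => absurd he (by simp), ?_⟩
        simp only [Finset.card_empty, Nat.mul_zero] at hNcard ⊢
        exact hNcard
      set ℓ : Fin k := ⟨j, hjk⟩ with hℓdef
      have hNedge : ∀ e ∈ N, e.1 ≠ e.2 ∧ ¬ G₁.Adj e.1 e.2 := by
        intro e he
        have := hN.1 e he
        rwa [SimpleGraph.compl_adj] at this
      haveI : Fintype ((Gc ℓ).ConnectedComponent × (Gc ℓ).ConnectedComponent) :=
        Fintype.ofFinite _
      set g : V × V → (Gc ℓ).ConnectedComponent × (Gc ℓ).ConnectedComponent :=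
        fun e => ((Gc ℓ).connectedComponentMk e.1, (Gc ℓ).connectedComponentMk e.2) with hgdef
      obtain ⟨b, hb⟩ := aux_pigeonhole_fiber N g hNne
      set F := N.filter (fun e => g e = b) with hFdef
      have hFsub : F ⊆ N := Finset.filter_subset _ _
      have hcard2 : Fintype.card ((Gc ℓ).ConnectedComponent × (Gc ℓ).ConnectedComponent)
          ≤ c ^ 2 := by
        rw [← Nat.card_eq_fintype_card, Nat.card_prod, sq]
        exact Nat.mul_le_mul (hcomp ℓ) (hcomp ℓ)
      have hNF : N.card ≤ c ^ 2 * F.card :=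
        le_trans hb (Nat.mul_le_mul hcard2 le_rfl)
      have hF1 : ∀ e ∈ F, (Gc ℓ).connectedComponentMk e.1 = b.1 := fun e he =>
        congrArg Prod.fst (Finset.mem_filter.1 he).2
      have hF2 : ∀ e ∈ F, (Gc ℓ).connectedComponentMk e.2 = b.2 := fun e he =>
        congrArg Prod.snd (Finset.mem_filter.1 he).2
      by_cases hbb : b.1 = b.2
      · -- same component: star blow-up structure
        obtain ⟨A, r, B, hsupp, hAB, hBB, hadj⟩ := hstar ℓ b.1
        have hmem1 : ∀ e ∈ F, e.1 ∈ b.1.supp := fun e he =>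
          (ConnectedComponent.mem_supp_iff _ _).2 (hF1 e he)
        have hmem2 : ∀ e ∈ F, e.2 ∈ b.1.supp := fun e he =>
          (ConnectedComponent.mem_supp_iff _ _).2 ((hF2 e he).trans hbb.symm)
        have hnadjF : ∀ e ∈ F, ¬ (e.1 ∈ A ∨ e.2 ∈ A ∨ ∃ i, e.1 ∈ B i ∧ e.2 ∈ B i) := by
          intro e he
          have h1 := hNedge e (hFsub he)
          rw [← hadj e.1 e.2 (hmem1 e he) (hmem2 e he) h1.1]
          exact fun h => h1.2 (hsub ℓ h)
        have hexB : ∀ (v : V), v ∈ b.1.supp → v ∉ A → ∃ i, v ∈ B i := by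
          intro v hv hvA
          have : v ∈ A ∪ ⋃ i, B i := hsupp ▸ hv
          rcases this with h | h
          · exact absurd h hvA
          · exact Set.mem_iUnion.1 h
        have hex1 : ∀ e ∈ F, ∃ i, e.1 ∈ B i := fun e he =>
          hexB e.1 (hmem1 e he) fun h => hnadjF e he (Or.inl h)
        have hex2 : ∀ e ∈ F, ∃ i, e.2 ∈ B i := fun e he =>
          hexB e.2 (hmem2 e he) fun h => hnadjF e he (Or.inr (Or.inl h))
        obtain ⟨e0, he0⟩ : F.Nonempty := by
          rcases F.eq_empty_or_nonempty with h | h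
          · exfalso
            rw [h] at hNF
            simp only [Finset.card_empty, Nat.mul_zero, Nat.le_zero] at hNF
            exact hNne.ne_empty (Finset.card_eq_zero.1 hNF)
          · exact h
        obtain ⟨i0, -⟩ := hex1 e0 he0
        set p : V × V → Fin r := fun e => if h : ∃ i, e.1 ∈ B i then h.choose else i0 with hpdef
        set q : V × V → Fin r := fun e => if h : ∃ i, e.2 ∈ B i then h.choose else i0 with hqdef
        have hp : ∀ e ∈ F, e.1 ∈ B (p e) := by
          intro e he
          simp only [hpdef, dif_pos (hex1 e he)]
          exact (hex1 e he).choose_spec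
        have hq : ∀ e ∈ F, e.2 ∈ B (q e) := by
          intro e he
          simp only [hqdef, dif_pos (hex2 e he)]
          exact (hex2 e he).choose_spec
        have huniq : ∀ (v : V) (i i' : Fin r), v ∈ B i → v ∈ B i' → i = i' := by
          intro v i i' h h'
          by_contra hne
          exact Set.disjoint_left.1 (hBB i i' hne) h h'
        have hpq : ∀ e ∈ F, p e ≠ q e := by
          intro e he heq
          exact hnadjF e he (Or.inr (Or.inr ⟨p e, hp e he, heq ▸ hq e he⟩))
        obtain ⟨T, hT⟩ := aux_exists_cut F p q hpq
        set N' := F.filter (fun e => p e ∈ T ∧ q e ∉ T) with hN'def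
        have hN'F : N' ⊆ F := Finset.filter_subset _ _
        have hN'N : N' ⊆ N := fun x hx => hFsub (hN'F hx)
        refine ⟨N', aux_matchingSet_subset hN hN'N, ?_, ?_⟩
        · intro ℓ' hℓ' e he e' he'
          rcases Nat.lt_succ_iff_lt_or_eq.1 hℓ' with h | h
          · exact hNcol ℓ' h e (hN'N he) e' (hN'N he')
          · have hℓℓ : ℓ' = ℓ := Fin.ext h
            subst hℓℓ
            intro hadje
            have heF := hN'F he
            have he'F := hN'F he'
            have hne : e.1 ≠ e'.2 := by
              by_cases hee : e = e'
              · subst hee; exact (hNedge e (hFsub heF)).1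
              · exact (hN.2 e (hFsub heF) e' (hFsub he'F) hee).2.1
            have hcase := (hadj e.1 e'.2 (hmem1 e heF) (hmem2 e' he'F) hne).1 hadje
            rcases hcase with h1 | h1 | ⟨i, hi1, hi2⟩
            · exact Set.disjoint_left.1 (hAB (p e)) h1 (hp e heF)
            · exact Set.disjoint_left.1 (hAB (q e')) h1 (hq e' he'F)
            · have h2 : i = p e := huniq e.1 i (p e) hi1 (hp e heF)
              have h3 : i = q e' := huniq e'.2 i (q e') hi2 (hq e' he'F)
              have hTm := (Finset.mem_filter.1 he).2
              have hTm' := (Finset.mem_filter.1 he').2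
              exact hTm'.2 (h3 ▸ h2 ▸ hTm.1)
        · calc M.card ≤ (4 * c ^ 2) ^ j * N.card := hNcard
            _ ≤ (4 * c ^ 2) ^ j * (c ^ 2 * F.card) := Nat.mul_le_mul le_rfl hNF
            _ ≤ (4 * c ^ 2) ^ j * (c ^ 2 * (4 * N'.card)) :=
                Nat.mul_le_mul le_rfl (Nat.mul_le_mul le_rfl hT)
            _ = (4 * c ^ 2) ^ (j + 1) * N'.card := by ring
      · -- different components
        refine ⟨F, aux_matchingSet_subset hN hFsub, ?_, ?_⟩
        · intro ℓ' hℓ' e he e' he'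
          rcases Nat.lt_succ_iff_lt_or_eq.1 hℓ' with h | h
          · exact hNcol ℓ' h e (hFsub he) e' (hFsub he')
          · have hℓℓ : ℓ' = ℓ := Fin.ext h
            subst hℓℓ
            intro hadjj
            have h1 : (Gc ℓ).connectedComponentMk e.1 = (Gc ℓ).connectedComponentMk e'.2 :=
              ConnectedComponent.sound hadjj.reachable
            exact hbb (((hF1 e he).symm.trans h1).trans (hF2 e' he'))
        · calc M.card ≤ (4 * c ^ 2) ^ j * N.card := hNcard
            _ ≤ (4 * c ^ 2) ^ j * (c ^ 2 * F.card) := Nat.mul_le_mul le_rfl hNF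
            _ ≤ (4 * c ^ 2) ^ (j + 1) * F.card := by
                rw [pow_succ (4 * c ^ 2) j, mul_assoc]
                exact Nat.mul_le_mul le_rfl
                  (Nat.mul_le_mul (Nat.le_mul_of_pos_left _ (by norm_num)) le_rfl)
  obtain ⟨N, hN, hNcol, hNcard⟩ := key k le_rfl
  rcases N.eq_empty_or_nonempty with rfl | ⟨e0, he0⟩
  · have hM0 : M.card = 0 := by simpa using hNcard
    rw [hM0, Nat.cast_zero]
    positivity
  · have hsnd : ∀ e ∈ N, e.2 ∈ {v | v ≠ e0.1 ∧ ¬ G₁.Adj e0.1 v} := by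
      intro e he
      refine ⟨?_, ?_⟩
      · by_cases hee : e = e0
        · subst hee
          have := hN.1 e he
          rw [SimpleGraph.compl_adj] at this
          exact Ne.symm this.1
        · exact Ne.symm (hN.2 e0 he0 e he (fun h => hee h.symm)).2.1
      · intro hadj
        obtain ⟨ℓ', hℓ'⟩ := hcover e0.1 e.2 hadj
        exact hNcol ℓ' ℓ'.isLt e0 he0 e he hℓ'
    have hinj : Set.InjOn Prod.snd (↑N : Set (V × V)) := by
      intro e he e' he' hee
      by_contra hne
      exact (hN.2 e (Finset.mem_coe.1 he) e' (Finset.mem_coe.1 he') hne).2.2.2 hee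
    have hNcard' : (N.card : ℝ) ≤ δ * n := by
      have h1 : (N.image Prod.snd).card = N.card := Finset.card_image_of_injOn hinj
      have h2 : (↑(N.image Prod.snd) : Set V) ⊆ {v | v ≠ e0.1 ∧ ¬ G₁.Adj e0.1 v} := by
        intro v hv
        simp only [Finset.coe_image, Set.mem_image, Finset.mem_coe] at hv
        obtain ⟨e, he, rfl⟩ := hv
        exact hsnd e he
      have h3 : N.card ≤ ({v | v ≠ e0.1 ∧ ¬ G₁.Adj e0.1 v} : Set V).ncard := by
        rw [← h1, ← Set.ncard_coe_finset]
        exact Set.ncard_le_ncard h2 (Set.toFinite _)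
      calc (N.card : ℝ) ≤ _ := Nat.cast_le.2 h3
        _ ≤ δ * n := hdeg e0.1
    have hM' : (M.card : ℝ) ≤ ((4 * c ^ 2 : ℕ) : ℝ) ^ k * (δ * n) := by
      calc (M.card : ℝ) ≤ (((4 * c ^ 2) ^ k * N.card : ℕ) : ℝ) := Nat.cast_le.2 hNcard
        _ = ((4 * c ^ 2 : ℕ) : ℝ) ^ k * (N.card : ℝ) := by push_cast; ring
        _ ≤ _ := mul_le_mul_of_nonneg_left hNcard' (by positivity)
    calc (M.card : ℝ) ≤ ((4 * c ^ 2 : ℕ) : ℝ) ^ k * (δ * n) := hM'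
      _ ≤ (2 * c : ℝ) ^ (2 * k) * 4 ^ k * δ * n := by
        have hbase : ((4 * c ^ 2 : ℕ) : ℝ) = (2 * (c : ℝ)) ^ 2 := by push_cast; ring
        rw [hbase, ← pow_mul]
        have h2 : (1 : ℝ) ≤ 4 ^ k := one_le_pow₀ (by norm_num)
        have h3 : (0 : ℝ) ≤ δ * n := by positivity
        have h4 : (0 : ℝ) ≤ (2 * (c : ℝ)) ^ (2 * k) := by positivity
        nlinarith [mul_nonneg h4 h3]
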